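/- In a δ-hyperbolic Cayley graph, suppose geodesic words a, b, u, v satisfy vb =_G au, and u factors as u = u'u''u''' with |u'| ≥ |a| + 2δ, |u''| ≥ 4δ, and |u'''| ≥ |b| + 2δ. Then there is a factorization v = v'v''v''' and geodesic words c, d with |c|, |d| ≤ 2δ such that v'c =_G au', v''d =_G cu'', and v'''b =_G du'''. -/

import Mathlib

/-- The element of the group `G` represented by the word `w` over the
generating set, where `σ` maps generators to group elements. -/
def evalW {α : Type*} {G : Type*} [Group G] (σ : α → G) (w : List α) : G :=
  (w.map σ).prod

/-- The word length of a group element: the smallest length of a word over the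
generators representing it. -/
noncomputable def wlen {α : Type*} {G : Type*} [Group G] (σ : α → G) (g : G) : ℕ :=
  sInf {n | ∃ w : List α, evalW σ w = g ∧ w.length = n}

/-- The word metric on the Cayley graph of `G` with respect to `σ`. -/
noncomputable def gdist {α : Type*} {G : Type*} [Group G] (σ : α → G) (g h : G) : ℕ :=
  wlen σ (g⁻¹ * h)

/-- `σ` lists a generating set of `G`: every element is represented by a word. -/
def Generates {α : Type*} {G : Type*} [Group G] (σ : α → G) : Prop :=
  ∀ g : G, ∃ w : List α, evalW σ w = g

/-- The generating set is symmetric: it is closed under inversion. -/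
def SymmetricGens {α : Type*} {G : Type*} [Group G] (σ : α → G) : Prop :=
  ∀ a : α, ∃ b : α, σ b = (σ a)⁻¹

/-- A word is geodesic if it labels a geodesic path in the Cayley graph,
i.e. its length equals the word length of the element it represents. -/
def IsGeodesicWord {α : Type*} {G : Type*} [Group G] (σ : α → G) (w : List α) : Prop :=
  wlen σ (evalW σ w) = w.length

/-- The Cayley graph of `G` (w.r.t. `σ`) is `δ`-hyperbolic: every geodesic
triangle is `δ`-slim.  A triangle is encoded by geodesic words `x, y, z` with
`eval x · eval y · eval z = 1`; the side labelled `x` starts at `1`, the side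
labelled `y` starts at `eval x`, the side labelled `z` starts at `eval x · eval y`.
Slimness: every point on the first side is within distance `δ` of the union of
the other two sides (by symmetry of the quantification this applies to each side). -/
def DeltaHyperbolic {α : Type*} {G : Type*} [Group G] (σ : α → G) (δ : ℕ) : Prop :=
  ∀ x y z : List α, IsGeodesicWord σ x → IsGeodesicWord σ y → IsGeodesicWord σ z →
    evalW σ x * evalW σ y * evalW σ z = 1 →
    ∀ i ≤ x.length, ∃ j : ℕ,
      (j ≤ y.length ∧
        gdist σ (evalW σ (x.take i)) (evalW σ x * evalW σ (y.take j)) ≤ δ) ∨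
      (j ≤ z.length ∧
        gdist σ (evalW σ (x.take i)) (evalW σ x * evalW σ y * evalW σ (z.take j)) ≤ δ)

section Helpers

variable {α : Type*} {G : Type*} [Group G] (σ : α → G)

lemma evalW_nil : evalW σ ([] : List α) = 1 := rfl

lemma evalW_cons (x : α) (w : List α) : evalW σ (x :: w) = σ x * evalW σ w := by
  simp [evalW]

lemma evalW_singleton (x : α) : evalW σ [x] = σ x := by simp [evalW]

lemma evalW_append (w1 w2 : List α) :
    evalW σ (w1 ++ w2) = evalW σ w1 * evalW σ w2 := by
  simp [evalW]

lemma evalW_take_drop (w : List α) (n : ℕ) :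
    evalW σ (w.take n) * evalW σ (w.drop n) = evalW σ w := by
  rw [← evalW_append, List.take_append_drop]

lemma wlen_le (w : List α) : wlen σ (evalW σ w) ≤ w.length :=
  Nat.sInf_le ⟨w, rfl, rfl⟩

lemma exists_geodesic (hgen : Generates σ) (g : G) :
    ∃ w : List α, evalW σ w = g ∧ IsGeodesicWord σ w ∧ w.length = wlen σ g := by
  have hne : {n | ∃ w : List α, evalW σ w = g ∧ w.length = n}.Nonempty := by
    obtain ⟨w, hw⟩ := hgen g; exact ⟨w.length, w, hw, rfl⟩
  obtain ⟨w, hw, hl⟩ := Nat.sInf_mem hne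
  exact ⟨w, hw, by rw [IsGeodesicWord, hw]; exact hl.symm, hl⟩

lemma wlen_one : wlen σ (1 : G) = 0 :=
  Nat.le_zero.mp (by simpa [evalW_nil] using wlen_le σ ([] : List α))

lemma eq_one_of_wlen_eq_zero (hgen : Generates σ) {g : G} (h : wlen σ g = 0) : g = 1 := by
  obtain ⟨w, hw, _, hl⟩ := exists_geodesic σ hgen g
  rw [h] at hl
  rw [← hw, List.length_eq_zero_iff.mp hl]; rfl

lemma wlen_mul_le (hgen : Generates σ) (g h : G) :
    wlen σ (g * h) ≤ wlen σ g + wlen σ h := by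
  obtain ⟨w1, hw1, _, hl1⟩ := exists_geodesic σ hgen g
  obtain ⟨w2, hw2, _, hl2⟩ := exists_geodesic σ hgen h
  calc wlen σ (g * h) = wlen σ (evalW σ (w1 ++ w2)) := by rw [evalW_append, hw1, hw2]
    _ ≤ (w1 ++ w2).length := wlen_le σ _
    _ = wlen σ g + wlen σ h := by rw [List.length_append, hl1, hl2]

/-- formal inverse word -/
def invW (ι : α → α) (w : List α) : List α := w.reverse.map ι

variable {ι : α → α}

lemma evalW_map_inv (hι : ∀ x, σ (ι x) = (σ x)⁻¹) (l : List α) : evalW σ (l.map ι) = (evalW σ l.reverse)⁻¹ := by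
  induction l with
  | nil => simp [evalW]
  | cons x t ih =>
      rw [List.map_cons, List.reverse_cons, evalW_cons, hι, ih, evalW_append,
        mul_inv_rev, evalW_singleton]

lemma evalW_invW (hι : ∀ x, σ (ι x) = (σ x)⁻¹) (w : List α) : evalW σ (invW ι w) = (evalW σ w)⁻¹ := by
  rw [invW, evalW_map_inv σ hι, List.reverse_reverse]

lemma length_invW (w : List α) : (invW ι w).length = w.length := by
  simp [invW]

lemma evalW_invW_take (hι : ∀ x, σ (ι x) = (σ x)⁻¹) (w : List α) (j : ℕ) :
    evalW σ ((invW ι w).take j) = (evalW σ w)⁻¹ * evalW σ (w.take (w.length - j)) := by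
  rw [invW, ← List.map_take, evalW_map_inv σ hι]
  have h : (w.reverse.take j).reverse = w.drop (w.length - j) := by
    rw [List.reverse_take, List.reverse_reverse, List.length_reverse]
  rw [h]
  have := evalW_take_drop σ w (w.length - j)
  rw [← this]
  group

lemma wlen_inv_le (hι : ∀ x, σ (ι x) = (σ x)⁻¹) (hgen : Generates σ) (g : G) : wlen σ g⁻¹ ≤ wlen σ g := by
  obtain ⟨w, hw, _, hl⟩ := exists_geodesic σ hgen g
  calc wlen σ g⁻¹ = wlen σ (evalW σ (invW ι w)) := by rw [evalW_invW σ hι, hw]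
    _ ≤ (invW ι w).length := wlen_le σ _
    _ = wlen σ g := by rw [length_invW, hl]

lemma wlen_inv (hι : ∀ x, σ (ι x) = (σ x)⁻¹) (hgen : Generates σ) (g : G) : wlen σ g⁻¹ = wlen σ g :=
  le_antisymm (wlen_inv_le σ hι hgen g)
    (by simpa using wlen_inv_le σ hι hgen g⁻¹)

lemma isGeodesic_invW {w : List α} (hι : ∀ x, σ (ι x) = (σ x)⁻¹) (hgen : Generates σ) (hw : IsGeodesicWord σ w) :
    IsGeodesicWord σ (invW ι w) := by
  rw [IsGeodesicWord, evalW_invW σ hι, wlen_inv σ hι hgen, length_invW]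
  exact hw

lemma geodesic_split {w1 w2 : List α} (hgen : Generates σ)
    (hw : IsGeodesicWord σ (w1 ++ w2)) :
    IsGeodesicWord σ w1 ∧ IsGeodesicWord σ w2 := by
  have h1 : wlen σ (evalW σ w1) ≤ w1.length := wlen_le σ _
  have h2 : wlen σ (evalW σ w2) ≤ w2.length := wlen_le σ _
  have h3 : w1.length + w2.length ≤ wlen σ (evalW σ w1) + wlen σ (evalW σ w2) := by
    calc w1.length + w2.length = (w1 ++ w2).length := List.length_append.symm
      _ = wlen σ (evalW σ (w1 ++ w2)) := hw.symm
      _ ≤ _ := by rw [evalW_append]; exact wlen_mul_le σ hgen _ _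
  exact ⟨by rw [IsGeodesicWord]; omega, by rw [IsGeodesicWord]; omega⟩

lemma geodesic_take {w : List α} (hgen : Generates σ) (hw : IsGeodesicWord σ w) (n : ℕ) :
    IsGeodesicWord σ (w.take n) := by
  have := geodesic_split σ hgen (w1 := w.take n) (w2 := w.drop n)
    (by rw [List.take_append_drop]; exact hw)
  exact this.1

lemma geodesic_drop {w : List α} (hgen : Generates σ) (hw : IsGeodesicWord σ w) (n : ℕ) :
    IsGeodesicWord σ (w.drop n) := by
  have := geodesic_split σ hgen (w1 := w.take n) (w2 := w.drop n)
    (by rw [List.take_append_drop]; exact hw)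
  exact this.2

/-- triangle inequality in `wlen` form -/
lemma wlen_tri (hgen : Generates σ) (x y z : G) :
    wlen σ (x⁻¹ * z) ≤ wlen σ (x⁻¹ * y) + wlen σ (y⁻¹ * z) := by
  have : x⁻¹ * z = (x⁻¹ * y) * (y⁻¹ * z) := by group
  rw [this]; exact wlen_mul_le σ hgen _ _

lemma wlen_symm {ι : α → α} (hι : ∀ x, σ (ι x) = (σ x)⁻¹) (hgen : Generates σ) (x y : G) :
    wlen σ (x⁻¹ * y) = wlen σ (y⁻¹ * x) := by
  rw [← wlen_inv σ hι hgen (y⁻¹ * x)]; group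

end Helpers

section Key

variable {α : Type*} {G : Type*} [Group G]

/-- Key two-piece lemma. -/
lemma key (σ : α → G) (δ : ℕ)
    (hgen : Generates σ) (hsym : SymmetricGens σ) (hhyp : DeltaHyperbolic σ δ)
    (a b u v : List α)
    (ha : IsGeodesicWord σ a) (hb : IsGeodesicWord σ b)
    (hu : IsGeodesicWord σ u) (hv : IsGeodesicWord σ v)
    (heq : evalW σ v * evalW σ b = evalW σ a * evalW σ u)
    (u1 u2 : List α) (hsplit : u = u1 ++ u2)
    (h1 : a.length + 2 * δ ≤ u1.length) (h2 : b.length + 2 * δ ≤ u2.length) :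
    ∃ t, t ≤ v.length ∧ ∃ c : List α, IsGeodesicWord σ c ∧ c.length ≤ 2 * δ ∧
      evalW σ (v.take t) * evalW σ c = evalW σ a * evalW σ u1 := by
  classical
  set A := evalW σ a with hA
  set B := evalW σ b with hB
  set U := evalW σ u with hU
  set V := evalW σ v with hV
  choose ι hι using hsym
  -- reduce to a distance claim
  suffices h : ∃ t, t ≤ v.length ∧
      wlen σ ((evalW σ (v.take t))⁻¹ * (A * evalW σ u1)) ≤ 2 * δ by
    obtain ⟨t, ht, hd⟩ := h
    obtain ⟨c, hc_eval, hc_geo, hc_len⟩ :=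
      exists_geodesic σ hgen ((evalW σ (v.take t))⁻¹ * (A * evalW σ u1))
    refine ⟨t, ht, c, hc_geo, by rw [hc_len]; exact hd, ?_⟩
    rw [hc_eval]; group
  -- diagonal geodesic
  obtain ⟨g, hg_eval, hg_geo, _⟩ := exists_geodesic σ hgen (A⁻¹ * V)
  have hAU : A * U = V * B := heq.symm
  -- basic eval facts
  have hu12 : evalW σ u1 * evalW σ u2 = U := by rw [hU, hsplit, evalW_append]
  have hu1geo : IsGeodesicWord σ u1 := (geodesic_split σ hgen (hsplit ▸ hu)).1
  have hu2geo : IsGeodesicWord σ u2 := (geodesic_split σ hgen (hsplit ▸ hu)).2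
  -- triangle 2 : sides u, invW b, invW g
  have hbbgeo : IsGeodesicWord σ (invW ι b) := isGeodesic_invW σ hι hgen hb
  have hgggeo : IsGeodesicWord σ (invW ι g) := isGeodesic_invW σ hι hgen hg_geo
  have hprod2 : evalW σ u * evalW σ (invW ι b) * evalW σ (invW ι g) = 1 := by
    rw [evalW_invW σ hι, evalW_invW σ hι, hg_eval, ← hU, ← hB]
    have : U * B⁻¹ * (A⁻¹ * V)⁻¹ = A⁻¹ * (A * U * B⁻¹ * V⁻¹) * A := by group
    rw [this, hAU]; group
  have hiu : u1.length ≤ u.length := by rw [hsplit]; simp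
  have htake_u1 : u.take u1.length = u1 := by rw [hsplit]; exact List.take_left
  obtain ⟨j, hj⟩ := hhyp u (invW ι b) (invW ι g) hu hbbgeo hgggeo hprod2 u1.length hiu
  rcases hj with ⟨hjle, hjd⟩ | ⟨hjle, hjd⟩
  · -- case: near the b-side; forces δ = 0 and endpoint V
    rw [length_invW] at hjle
    rw [gdist, htake_u1, evalW_invW_take σ hι] at hjd
    set t0 := b.length - j with ht0
    set q : G := U * (B⁻¹ * evalW σ (b.take t0)) with hq
    have hd1 : wlen σ ((evalW σ u1)⁻¹ * U) = u2.length := by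
      have : (evalW σ u1)⁻¹ * U = evalW σ u2 := by rw [← hu12]; group
      rw [this]; exact hu2geo
    have hd2 : wlen σ (q⁻¹ * U) = j := by
      have hdropeq : (evalW σ (b.take t0))⁻¹ * B = evalW σ (b.drop t0) := by
        rw [hB, ← evalW_take_drop σ b t0]; group
      have : q⁻¹ * U = evalW σ (b.drop t0) := by rw [hq, ← hdropeq]; group
      rw [this, geodesic_drop σ hgen hb t0, List.length_drop]
      omega
    have htri : u2.length ≤ δ + j := by
      calc u2.length = wlen σ ((evalW σ u1)⁻¹ * U) := hd1.symm
        _ ≤ wlen σ ((evalW σ u1)⁻¹ * q) + wlen σ (q⁻¹ * U) := wlen_tri σ hgen _ _ _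
        _ ≤ δ + j := by
            rw [hd2]
            exact Nat.add_le_add hjd le_rfl
    have hδ0 : δ = 0 ∧ j = b.length := by omega
    have ht00 : t0 = 0 := by omega
    have hq1 : (evalW σ u1)⁻¹ * q = 1 := by
      apply eq_one_of_wlen_eq_zero σ hgen
      omega
    have hqval : q = U * B⁻¹ := by rw [hq, ht00]; simp [evalW_nil]
    refine ⟨v.length, le_rfl, ?_⟩
    have hvfull : evalW σ (v.take v.length) = V := by rw [List.take_length]
    have : A * evalW σ u1 = V := by
      have h5 : evalW σ u1 = U * B⁻¹ := by
        rw [hqval] at hq1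
        exact inv_mul_eq_one.mp hq1
      rw [h5, ← mul_assoc, hAU]; group
    rw [hvfull, this]
    simp [wlen_one σ]
  · -- case: near the diagonal
    rw [length_invW] at hjle
    rw [gdist, htake_u1, evalW_invW σ hι, evalW_invW_take σ hι] at hjd
    set i' := g.length - j with hi'
    have hr : U * (evalW σ b)⁻¹ * ((evalW σ g)⁻¹ * evalW σ (g.take i')) = evalW σ (g.take i') := by
      rw [hg_eval, ← hB]
      have hUB : U * B⁻¹ = A⁻¹ * V := by
        have h9 : A * (U * B⁻¹) = A * (A⁻¹ * V) := by rw [← mul_assoc, hAU]; group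
        exact mul_left_cancel h9
      rw [hUB]; group
    have hjd' : wlen σ ((evalW σ u1)⁻¹ * evalW σ (g.take i')) ≤ δ := by
      rw [← hr]
      have : U * (evalW σ b)⁻¹ * ((evalW σ g)⁻¹ * evalW σ (g.take i'))
          = evalW σ u * (evalW σ b)⁻¹ * ((evalW σ g)⁻¹ * evalW σ (g.take i')) := by rw [hU]
      rw [this]
      convert hjd using 2
    -- triangle 1 : sides g, invW v, a
    have hvvgeo : IsGeodesicWord σ (invW ι v) := isGeodesic_invW σ hι hgen hv
    have hprod1 : evalW σ g * evalW σ (invW ι v) * evalW σ a = 1 := by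
      rw [evalW_invW σ hι, hg_eval, ← hV, ← hA]; group
    have hi'le : i' ≤ g.length := by omega
    obtain ⟨m, hm⟩ := hhyp g (invW ι v) a hg_geo hvvgeo ha hprod1 i' hi'le
    rcases hm with ⟨hmle, hmd⟩ | ⟨hmle, hmd⟩
    · -- near v : done
      rw [length_invW] at hmle
      rw [gdist, evalW_invW_take σ hι, hg_eval, ← hV] at hmd
      set t := v.length - m with htdef
      refine ⟨t, by omega, ?_⟩
      have hmid : (evalW σ (v.take t))⁻¹ * (A * evalW σ u1)
          = ((A⁻¹ * evalW σ (v.take t))⁻¹ * evalW σ (g.take i'))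
            * ((evalW σ (g.take i'))⁻¹ * evalW σ u1) := by group
      calc wlen σ ((evalW σ (v.take t))⁻¹ * (A * evalW σ u1))
          ≤ wlen σ ((A⁻¹ * evalW σ (v.take t))⁻¹ * evalW σ (g.take i'))
            + wlen σ ((evalW σ (g.take i'))⁻¹ * evalW σ u1) := by
            rw [hmid]; exact wlen_mul_le σ hgen _ _
        _ ≤ δ + δ := by
            apply Nat.add_le_add
            · rw [wlen_symm σ hι hgen]
              have : (evalW σ (g.take i'))⁻¹ * (A⁻¹ * evalW σ (v.take t))
                  = (evalW σ (g.take i'))⁻¹ * (A⁻¹ * V * (V⁻¹ * evalW σ (v.take t))) := by group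
              rw [this]; exact hmd
            · rw [wlen_symm σ hι hgen]; exact hjd'
        _ = 2 * δ := by omega
    · -- near a : forces m = 0
      rw [gdist, evalW_invW σ hι, hg_eval, ← hV] at hmd
      have hs : A⁻¹ * V * V⁻¹ * evalW σ (a.take m) = A⁻¹ * evalW σ (a.take m) := by group
      rw [hs] at hmd
      set s : G := A⁻¹ * evalW σ (a.take m) with hsdef
      have hd3 : wlen σ ((evalW σ u1)⁻¹ * s) ≤ 2 * δ := by
        have hmid : (evalW σ u1)⁻¹ * s
            = ((evalW σ u1)⁻¹ * evalW σ (g.take i')) * ((evalW σ (g.take i'))⁻¹ * s) := by group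
        rw [hmid]
        calc _ ≤ wlen σ ((evalW σ u1)⁻¹ * evalW σ (g.take i'))
              + wlen σ ((evalW σ (g.take i'))⁻¹ * s) := wlen_mul_le σ hgen _ _
          _ ≤ δ + δ := Nat.add_le_add hjd' hmd
          _ = 2 * δ := by omega
      have hd4 : wlen σ (s⁻¹) = a.length - m := by
        have : s⁻¹ = evalW σ (a.drop m) := by
          rw [hsdef, hA, ← evalW_take_drop σ a m]; group
        rw [this, geodesic_drop σ hgen ha m, List.length_drop]
      have hd5 : wlen σ (evalW σ u1) ≤ (a.length - m) + 2 * δ := by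
        have h9 : evalW σ u1 = (s⁻¹)⁻¹ * ((evalW σ u1)⁻¹ * s)⁻¹ := by group
        rw [h9]
        calc _ ≤ wlen σ ((s⁻¹)⁻¹) + wlen σ (((evalW σ u1)⁻¹ * s)⁻¹) := wlen_mul_le σ hgen _ _
          _ ≤ (a.length - m) + 2 * δ := by
              apply Nat.add_le_add
              · exact le_of_eq (by rw [wlen_inv σ hι hgen, hd4])
              · rw [wlen_inv σ hι hgen]; exact hd3
      rw [hu1geo] at hd5
      have hm0 : m = 0 := by omega
      refine ⟨0, Nat.zero_le _, ?_⟩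
      have : (evalW σ (v.take 0))⁻¹ * (A * evalW σ u1) = ((evalW σ u1)⁻¹ * s)⁻¹ := by
        rw [hsdef, hm0]; simp [evalW_nil]
      rw [this, wlen_inv σ hι hgen]
      exact hd3

end Key

/-- Lemma on geodesic quadrilaterals, three-piece version: if `vb =_G au` with
`a, b, u, v` geodesic and `u = u'u''u'''` with `|u'| ≥ |a| + 2δ`, `|u''| ≥ 4δ`,
`|u'''| ≥ |b| + 2δ`, then there is a factorization `v = v'v''v'''` and geodesic
words `c, d` with `|c|, |d| ≤ 2δ` such that `v'c =_G au'`, `v''d =_G cu''`, and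
`v'''b =_G du'''`. -/
theorem quadrilateral_split_three {α : Type*} {G : Type*} [Group G] [Fintype α]
    (σ : α → G) (δ : ℕ)
    (hgen : Generates σ) (hsym : SymmetricGens σ) (hhyp : DeltaHyperbolic σ δ)
    (a b u v : List α)
    (ha : IsGeodesicWord σ a) (hb : IsGeodesicWord σ b)
    (hu : IsGeodesicWord σ u) (hv : IsGeodesicWord σ v)
    (heq : evalW σ v * evalW σ b = evalW σ a * evalW σ u)
    (u' u'' u''' : List α) (hsplit : u = u' ++ u'' ++ u''')
    (h1 : a.length + 2 * δ ≤ u'.length) (h2 : 4 * δ ≤ u''.length)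
    (h3 : b.length + 2 * δ ≤ u'''.length) :
    ∃ v' v'' v''' c d : List α, v = v' ++ v'' ++ v''' ∧
      IsGeodesicWord σ c ∧ IsGeodesicWord σ d ∧
      c.length ≤ 2 * δ ∧ d.length ≤ 2 * δ ∧
      evalW σ v' * evalW σ c = evalW σ a * evalW σ u' ∧
      evalW σ v'' * evalW σ d = evalW σ c * evalW σ u'' ∧
      evalW σ v''' * evalW σ b = evalW σ d * evalW σ u''' := by
  classical
  have hsplit1 : u = u' ++ (u'' ++ u''') := by rw [hsplit, List.append_assoc]
  have h2' : b.length + 2 * δ ≤ (u'' ++ u''').length := by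
    rw [List.length_append]; omega
  obtain ⟨t, ht, c, hc_geo, hc_len, hc_rel⟩ :=
    key σ δ hgen hsym hhyp a b u v ha hb hu hv heq u' (u'' ++ u''') hsplit1 h1 h2'
  have hw_geo : IsGeodesicWord σ (v.drop t) := geodesic_drop σ hgen hv t
  have hvw : evalW σ (v.take t) * evalW σ (v.drop t) = evalW σ v := evalW_take_drop σ v t
  have hu23_geo : IsGeodesicWord σ (u'' ++ u''') :=
    (geodesic_split σ hgen (hsplit1 ▸ hu)).2
  have hrel2 : evalW σ (v.drop t) * evalW σ b = evalW σ c * evalW σ (u'' ++ u''') := by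
    have h9 : evalW σ (v.take t) * (evalW σ (v.drop t) * evalW σ b)
        = evalW σ (v.take t) * (evalW σ c * evalW σ (u'' ++ u''')) := by
      calc evalW σ (v.take t) * (evalW σ (v.drop t) * evalW σ b)
          = (evalW σ (v.take t) * evalW σ (v.drop t)) * evalW σ b := by group
        _ = evalW σ a * evalW σ u := by rw [hvw, heq]
        _ = (evalW σ a * evalW σ u') * evalW σ (u'' ++ u''') := by
            rw [hsplit1, evalW_append]; group
        _ = (evalW σ (v.take t) * evalW σ c) * evalW σ (u'' ++ u''') := by rw [hc_rel]
        _ = evalW σ (v.take t) * (evalW σ c * evalW σ (u'' ++ u''')) := by group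
    exact mul_left_cancel h9
  have h1'' : c.length + 2 * δ ≤ u''.length := by omega
  obtain ⟨s, hs, d, hd_geo, hd_len, hd_rel⟩ :=
    key σ δ hgen hsym hhyp c b (u'' ++ u''') (v.drop t) hc_geo hb hu23_geo hw_geo hrel2
      u'' u''' rfl h1'' h3
  have hws : evalW σ ((v.drop t).take s) * evalW σ ((v.drop t).drop s) = evalW σ (v.drop t) :=
    evalW_take_drop σ (v.drop t) s
  refine ⟨v.take t, (v.drop t).take s, (v.drop t).drop s, c, d, ?_, hc_geo, hd_geo,
    hc_len, hd_len, hc_rel, hd_rel, ?_⟩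
  · rw [List.append_assoc, List.take_append_drop, List.take_append_drop]
  · have h9 : evalW σ ((v.drop t).take s) * (evalW σ ((v.drop t).drop s) * evalW σ b)
        = evalW σ ((v.drop t).take s) * (evalW σ d * evalW σ u''') := by
      calc evalW σ ((v.drop t).take s) * (evalW σ ((v.drop t).drop s) * evalW σ b)
          = (evalW σ ((v.drop t).take s) * evalW σ ((v.drop t).drop s)) * evalW σ b := by group
        _ = evalW σ c * evalW σ (u'' ++ u''') := by rw [hws, hrel2]
        _ = (evalW σ c * evalW σ u'') * evalW σ u''' := by rw [evalW_append]; group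
        _ = (evalW σ ((v.drop t).take s) * evalW σ d) * evalW σ u''' := by rw [hd_rel]
        _ = evalW σ ((v.drop t).take s) * (evalW σ d * evalW σ u''') := by group
    exact mul_left_cancel h9
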